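/- For every G ∈ M(E), the rank of the submatrix of T(G) = (I − G)⁻¹ with rows indexed by C and columns indexed by R is at most b(R→C), the maximum number of pairwise vertex-disjoint directed paths from R to C in (V,E). -/

import Mathlib

open Matrix

/-- A directed path in the graph with edge set `E`: a nonempty list of pairwise distinct
vertices in which every pair of consecutive vertices is an edge. A single vertex is a
path of length `0`. -/
def IsDiPath {V : Type*} (E : Finset (V × V)) (l : List V) : Prop :=
  l ≠ [] ∧ l.Nodup ∧ l.Chain' (fun a b => (a, b) ∈ E)

/-- A directed path starting at a vertex of `R` and ending at a vertex of `C`. -/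
def IsDiPathFromTo {V : Type*} (E : Finset (V × V)) (R C : Finset V) (l : List V) : Prop :=
  IsDiPath E l ∧ (∃ r ∈ R, l.head? = some r) ∧ (∃ c ∈ C, l.getLast? = some c)

/-- There exist `n` pairwise vertex-disjoint directed paths from `R` to `C`. -/
def HasDisjointPaths {V : Type*} (E : Finset (V × V)) (R C : Finset V) (n : ℕ) : Prop :=
  ∃ f : Fin n → List V, (∀ k, IsDiPathFromTo E R C (f k)) ∧
    ∀ k l : Fin n, k ≠ l → ∀ v : V, v ∈ f k → v ∉ f l

/-- `b(R→C)`: the maximum number of pairwise vertex-disjoint directed paths from `R`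
to `C`. -/
noncomputable def maxDisjointPaths {V : Type*} (E : Finset (V × V)) (R C : Finset V) : ℕ :=
  sSup {n : ℕ | HasDisjointPaths E R C n}

/-- The model set `M(E)`: matrices `G` over `RatFunc ℝ` whose sparsity pattern matches the
edge set `E` (i.e. `G j i ≠ 0 ↔ (i,j) ∈ E`) and such that `I - G` is invertible. -/
def ModelSet {V : Type*} [Fintype V] [DecidableEq V] (E : Finset (V × V)) :
    Set (Matrix V V (RatFunc ℝ)) :=
  {G | (∀ i j : V, G j i ≠ 0 ↔ (i, j) ∈ E) ∧ IsUnit (1 - G)}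

/-- The network response matrix `T(G) = (I - G)⁻¹`. -/
noncomputable def netT {V : Type*} [Fintype V] [DecidableEq V]
    (G : Matrix V V (RatFunc ℝ)) : Matrix V V (RatFunc ℝ) := (1 - G)⁻¹


section AuxLin
open Matrix Function

variable {F : Type*} [Field F]

/-- From a matrix of rank m, extract m columns that are linearly independent. -/
lemma aux_exists_indep_cols {α β : Type*} [Fintype α] [Fintype β]
    (M : Matrix α β F) {m : ℕ} (hm : M.rank = m) :
    ∃ f : Fin m → β, Injective f ∧ LinearIndependent F (fun i => (fun a => M a (f i))) := by
  classical
  obtain ⟨b, hb_sub, hb_span, hb_ind⟩ := exists_linearIndependent F (Set.range Mᵀ)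
  have hfd : FiniteDimensional F (α → F) := by infer_instance
  have hbfin : b.Finite := Set.Finite.subset (Set.finite_range Mᵀ) hb_sub
  haveI := hbfin.fintype
  have hcard : Fintype.card b = m := by
    have h1 := finrank_span_set_eq_card (s := b) hb_ind
    rw [hb_span, show Module.finrank F (Submodule.span F (Set.range Mᵀ)) = M.rank from
      (Matrix.rank_eq_finrank_span_cols M).symm, hm] at h1
    rw [h1, Set.toFinset_card]
  obtain e := (Fintype.equivFinOfCardEq hcard).symm
  have hchoice : ∀ x : b, ∃ j : β, Mᵀ j = (x : α → F) := fun x => hb_sub x.2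
  choose f0 hf0 using hchoice
  refine ⟨fun i => f0 (e i), ?_, ?_⟩
  · intro i j hij
    have : Mᵀ (f0 (e i)) = Mᵀ (f0 (e j)) := by simp only at hij; rw [hij]
    rw [hf0, hf0] at this
    exact e.injective (Subtype.ext this)
  · have : (fun i => (fun a => M a (f0 (e i)))) = (fun x : b => (x : α → F)) ∘ e := by
      funext i
      exact hf0 (e i)
    rw [this]
    exact hb_ind.comp e e.injective

lemma aux_ker_of_rank {m : ℕ} (M : Matrix (Fin m) (Fin m) F) (hm : M.rank = m) :
    ∀ y : Fin m → F, M.mulVec y = 0 → y = 0 := by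
  intro y hy
  have hker : LinearMap.ker M.mulVecLin = ⊥ := by
    have h1 := LinearMap.finrank_range_add_finrank_ker M.mulVecLin
    rw [Module.finrank_fintype_fun_eq_card, Fintype.card_fin] at h1
    have h2 : Module.finrank F (LinearMap.range M.mulVecLin) = m := hm
    rw [h2] at h1
    have h3 : Module.finrank F (LinearMap.ker M.mulVecLin) = 0 := by omega
    exact Submodule.finrank_eq_zero.mp h3
  have := LinearMap.ker_eq_bot.mp hker
  apply this
  simpa [Matrix.mulVecLin_apply] using hy

/-- From a rank-m matrix, get row/column injections giving an m×m submatrix with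
trivial kernel. -/
lemma aux_exists_square {α β : Type*} [Fintype α] [Fintype β]
    (M : Matrix α β F) {m : ℕ} (hm : M.rank = m) :
    ∃ (cf : Fin m → α) (rf : Fin m → β), Injective cf ∧ Injective rf ∧
      ∀ y : Fin m → F, (Matrix.of fun i j => M (cf i) (rf j)).mulVec y = 0 → y = 0 := by
  obtain ⟨rf, hrf, hind⟩ := aux_exists_indep_cols M hm
  set M1 : Matrix α (Fin m) F := Matrix.of (fun a i => M a (rf i)) with hM1
  have hM1Trank : M1ᵀ.rank = m := by
    have h : LinearIndependent F (fun i => M1ᵀ i) := hind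
    simpa using h.rank_matrix (M := M1ᵀ)
  have hM1rank : M1.rank = m := by rw [← Matrix.rank_transpose M1]; exact hM1Trank
  obtain ⟨cf, hcf, hind2⟩ := aux_exists_indep_cols M1ᵀ hM1Trank
  refine ⟨cf, rf, hcf, hrf, ?_⟩
  set M2 : Matrix (Fin m) (Fin m) F := Matrix.of (fun i j => M (cf i) (rf j)) with hM2def
  have hM2rank : M2.rank = m := by
    have h : LinearIndependent F (fun i => M2 i) := hind2
    simpa using h.rank_matrix (M := M2)
  exact aux_ker_of_rank M2 hM2rank

lemma aux_phi {V : Type*} [Fintype V] [DecidableEq V] (A T : Matrix V V F)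
    (hTA : T * A = 1) {m : ℕ} (rv cv : Fin m → V) (hr : Injective rv) (hc : Injective cv)
    (hM2 : ∀ y : Fin m → F, (Matrix.of fun i j => T (cv i) (rv j)).mulVec y = 0 → y = 0) :
    ∃ φ : {v : V // ¬ v ∈ Set.range rv} ≃ {w : V // ¬ w ∈ Set.range cv},
      ∀ v, (φ v).1 = v.1 ∨ A v.1 (φ v).1 ≠ 0 := by
  classical
  -- the matrix B
  set B : Matrix {v : V // ¬ v ∈ Set.range rv} {w : V // ¬ w ∈ Set.range cv} F :=
    Matrix.of (fun v w => A v.1 w.1) with hBdef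
  -- step 1 : B has trivial kernel
  have hker : ∀ x, B.mulVec x = 0 → x = 0 := by
    intro x hx
    set x' : V → F := fun u => if h : u ∈ Set.range cv then 0 else x ⟨u, h⟩ with hx'def
    have hx'v : ∀ v : V, v ∉ Set.range rv → A.mulVec x' v = 0 := by
      intro v hv
      have hsplit := Fintype.sum_subtype_add_sum_subtype (fun u => ¬ u ∈ Set.range cv)
        (fun u => A v u * x' u)
      have h2 : ∑ u : {u : V // ¬ u ∈ Set.range cv}, A v u.1 * x' u.1 = 0 := by
        have hh := congrFun hx ⟨v, hv⟩
        simp only [Matrix.mulVec, dotProduct, Matrix.of_apply, Pi.zero_apply,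
          hBdef] at hh
        rw [← hh]
        exact Finset.sum_congr rfl (fun u _ => by rw [show x' u.1 = x u from dif_neg u.2])
      have h1 : ∑ u : {u : V // ¬ ¬ u ∈ Set.range cv}, A v u.1 * x' u.1 = 0 := by
        apply Finset.sum_eq_zero; intro u _
        rw [show x' u.1 = 0 from dif_pos (not_not.mp u.2), mul_zero]
      show ∑ u : V, A v u * x' u = 0
      rw [← hsplit, h1, h2, add_zero]
    have hx'c : ∀ i : Fin m, x' (cv i) = 0 := fun i => dif_pos ⟨i, rfl⟩
    have hxT : x' = T.mulVec (A.mulVec x') := by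
      rw [Matrix.mulVec_mulVec, hTA, Matrix.one_mulVec]
    set y : Fin m → F := fun i => A.mulVec x' (rv i) with hydef
    have hM2y : (Matrix.of fun i j => T (cv i) (rv j)).mulVec y = 0 := by
      funext i
      have h0 : x' (cv i) = ∑ u : V, T (cv i) u * A.mulVec x' u := by
        conv_lhs => rw [hxT]
        rfl
      have hsub : ∑ u ∈ Finset.univ.image rv, T (cv i) u * A.mulVec x' u
          = ∑ u : V, T (cv i) u * A.mulVec x' u := by
        apply Finset.sum_subset (Finset.subset_univ _)
        intro u _ hu
        have : u ∉ Set.range rv := by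
          intro ⟨j, hj⟩; exact hu (Finset.mem_image.mpr ⟨j, Finset.mem_univ _, hj⟩)
        rw [hx'v u this, mul_zero]
      have himg : ∑ u ∈ Finset.univ.image rv, T (cv i) u * A.mulVec x' u
          = ∑ j : Fin m, T (cv i) (rv j) * y j := by
        rw [Finset.sum_image (fun a _ b _ h => hr h)]
      have : (0 : F) = ∑ j : Fin m, T (cv i) (rv j) * y j := by
        rw [← himg, hsub, ← h0, hx'c i]
      simp only [Matrix.mulVec, dotProduct, Matrix.of_apply, Pi.zero_apply]
      exact this.symm
    have hy0 : y = 0 := hM2 y hM2y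
    have hAx' : A.mulVec x' = 0 := by
      funext u
      by_cases hu : u ∈ Set.range rv
      · obtain ⟨i, rfl⟩ := hu
        have : y i = 0 := by rw [hy0]; rfl
        exact this
      · exact hx'v u hu
    have hx'0 : x' = 0 := by rw [hxT, hAx', Matrix.mulVec_zero]
    funext w
    have h1 : x' w.1 = x w := dif_neg w.2
    rw [← h1, hx'0]
    rfl
  -- step 2 : same cardinality
  have hcard : Fintype.card {w : V // ¬ w ∈ Set.range cv}
      = Fintype.card {v : V // ¬ v ∈ Set.range rv} := by
    rw [Fintype.card_subtype_compl, Fintype.card_subtype_compl]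
    have h1 : Fintype.card {u : V // u ∈ Set.range cv} = m := by
      rw [Fintype.card_eq.mpr ⟨(Equiv.ofInjective cv hc).symm⟩, Fintype.card_fin]
    have h2 : Fintype.card {u : V // u ∈ Set.range rv} = m := by
      rw [Fintype.card_eq.mpr ⟨(Equiv.ofInjective rv hr).symm⟩, Fintype.card_fin]
    rw [h1, h2]
  -- step 3 : reindexed square matrix has nonzero det, extract permutation
  obtain e := Fintype.equivOfCardEq hcard
  set B' : Matrix {w : V // ¬ w ∈ Set.range cv} {w : V // ¬ w ∈ Set.range cv} F :=
    Matrix.of (fun w w' => B (e w) w') with hB'def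
  have hdet : B'.det ≠ 0 := by
    intro hdet
    obtain ⟨x, hx0, hx⟩ := Matrix.exists_mulVec_eq_zero_iff.mpr hdet
    apply hx0
    apply hker
    funext v
    have := congrFun hx (e.symm v)
    simpa [hB'def, Matrix.mulVec, dotProduct] using this
  have hperm : ∃ σ : Equiv.Perm {w : V // ¬ w ∈ Set.range cv},
      ∀ i, B' (σ i) i ≠ 0 := by
    by_contra hcon
    push_neg at hcon
    apply hdet
    rw [Matrix.det_apply]
    apply Finset.sum_eq_zero
    intro σ _
    obtain ⟨i, hi⟩ := hcon σ
    rw [show (∏ j, B' (σ j) j) = 0 from Finset.prod_eq_zero (Finset.mem_univ i) hi, smul_zero]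
  obtain ⟨σ, hσ⟩ := hperm
  refine ⟨e.symm.trans σ.symm, ?_⟩
  intro v
  by_cases hvv : (((e.symm.trans σ.symm) v) : V) = v.1
  · exact Or.inl hvv
  · right
    have h := hσ (σ.symm (e.symm v))
    rw [Equiv.apply_symm_apply] at h
    simpa [hB'def, hBdef] using h

end AuxLin

open Function

section Comb
variable {V : Type*} [DecidableEq V] {n : ℕ} {rv cv : Fin n → V}

open Classical in
noncomputable def gmap (φ : {v : V // ¬ v ∈ Set.range rv} ≃ {w : V // ¬ w ∈ Set.range cv}) :
    V → Option V := fun w =>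
  if hw : w ∈ Set.range cv then none
  else if _ : ((φ.symm ⟨w, hw⟩ : {v : V // ¬ v ∈ Set.range rv}) : V) = w then none
  else some ((φ.symm ⟨w, hw⟩ : {v : V // ¬ v ∈ Set.range rv}) : V)

variable {φ : {v : V // ¬ v ∈ Set.range rv} ≃ {w : V // ¬ w ∈ Set.range cv}}

lemma gmap_eq_some {w v : V} (h : gmap φ w = some v) :
    ∃ hw : ¬ w ∈ Set.range cv, ((φ.symm ⟨w, hw⟩ : _) : V) = v ∧ v ≠ w := by
  unfold gmap at h
  split_ifs at h with hw hv
  · injection h with h'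
    exact ⟨hw, h', fun hh => hv (h'.trans hh)⟩

lemma gmap_notin_rv {w v : V} (h : gmap φ w = some v) : ¬ v ∈ Set.range rv := by
  obtain ⟨hw, heq, _⟩ := gmap_eq_some h
  exact heq ▸ (φ.symm ⟨w, hw⟩).2

lemma gmap_ne {w v : V} (h : gmap φ w = some v) : v ≠ w :=
  (gmap_eq_some h).choose_spec.2

lemma gmap_phi {w v : V} (h : gmap φ w = some v) :
    ∀ hv : ¬ v ∈ Set.range rv, (φ ⟨v, hv⟩ : V) = w := by
  intro hv
  obtain ⟨hw, heq, _⟩ := gmap_eq_some h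
  have : φ.symm ⟨w, hw⟩ = ⟨v, hv⟩ := Subtype.ext heq
  have h2 := congrArg φ this
  rw [Equiv.apply_symm_apply] at h2
  exact congrArg Subtype.val h2.symm

lemma gmap_inj {w w' v : V} (h : gmap φ w = some v) (h' : gmap φ w' = some v) : w = w' := by
  have hv := gmap_notin_rv h
  rw [← gmap_phi h hv, ← gmap_phi h' hv]

lemma gmap_of_mem {w : V} (hw : w ∈ Set.range cv) : gmap φ w = none := by
  unfold gmap; rw [dif_pos hw]

lemma gmap_none {w : V} (h : gmap φ w = none) (hw : ¬ w ∈ Set.range cv) :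
    ¬ w ∈ Set.range rv ∧ ∀ u v : V, gmap φ u = some v → v ≠ w := by
  unfold gmap at h
  rw [dif_neg hw] at h
  split_ifs at h with hfix
  have hwr : ¬ w ∈ Set.range rv := hfix ▸ (φ.symm ⟨w, hw⟩).2
  refine ⟨hwr, ?_⟩
  intro u v hu hvw
  have h1 : φ.symm ⟨w, hw⟩ = ⟨w, hwr⟩ := Subtype.ext hfix
  have hv' : ¬ v ∈ Set.range rv := gmap_notin_rv hu
  have h2 := gmap_phi hu hv'
  have h3 : φ ⟨w, hwr⟩ = ⟨w, hw⟩ := by rw [← h1, Equiv.apply_symm_apply]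
  have h4 : (⟨v, hv'⟩ : {v : V // ¬ v ∈ Set.range rv}) = ⟨w, hwr⟩ := Subtype.ext hvw
  rw [h4, h3] at h2
  have h2' : w = u := h2
  exact gmap_ne hu (hvw.trans h2')

end Comb

section Comb2
variable {V : Type*} [Fintype V] [DecidableEq V] {n : ℕ} {rv cv : Fin n → V}
variable {φ : {v : V // ¬ v ∈ Set.range rv} ≃ {w : V // ¬ w ∈ Set.range cv}}

omit [Fintype V] in
lemma gmap_edge {E : Finset (V × V)}
    (hφ : ∀ v, ((φ v) : V) = (v : V) ∨ (((φ v) : V), (v : V)) ∈ E)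
    {w v : V} (h : gmap φ w = some v) : (w, v) ∈ E := by
  have hv := gmap_notin_rv h
  have h2 := gmap_phi h hv
  rcases hφ ⟨v, hv⟩ with h3 | h3
  · exact absurd (h2 ▸ h3 : w = v) (gmap_ne h).symm
  · rwa [h2] at h3

/-- Build a `gmap`-chain from `a` ending in the range of `cv`. -/
lemma gmap_build (N : ℕ) : ∀ (s : Finset V) (a : V),
    Fintype.card V ≤ N + s.card → a ∉ s →
    (∀ w ∈ s, ∀ u, gmap φ u = some w → u ∈ s) →
    (a ∈ Set.range rv ∨ ∃ u, gmap φ u = some a) →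
    (∀ u, gmap φ u = some a → u ∈ s) →
    ∃ l : List V, l.head? = some a ∧ List.Chain' (fun x y => gmap φ x = some y) l ∧
      l.Nodup ∧ (∀ x ∈ l, x ∉ s) ∧ ∃ i, l.getLast? = some (cv i) := by
  induction N with
  | zero =>
    intro s a hcard ha _ _ _
    have : s = Finset.univ := Finset.eq_univ_of_card s
      (le_antisymm (Finset.card_le_univ s) (by simpa using hcard))
    exact absurd (this ▸ Finset.mem_univ a) (this ▸ ha)
  | succ N ih =>
    intro s a hcard ha hclosed hinv hpre
    cases hga : gmap φ a with
    | none =>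
      by_cases hac : a ∈ Set.range cv
      · obtain ⟨i, hi⟩ := hac
        exact ⟨[a], rfl, List.isChain_singleton a, List.nodup_singleton a,
          by simpa using ha, ⟨i, by simp [hi]⟩⟩
      · obtain ⟨h1, h2⟩ := gmap_none hga hac
        rcases hinv with h3 | ⟨u, hu⟩
        · exact absurd h3 h1
        · exact absurd rfl (h2 u a hu)
    | some b =>
      have hba : b ≠ a := gmap_ne hga
      have hbs : b ∉ s := fun hb => ha (hclosed b hb a hga)
      have hbs' : b ∉ insert a s := by simp [hba, hbs]
      obtain ⟨l', hl'head, hl'chain, hl'nodup, hl'nots, i, hl'last⟩ :=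
        ih (insert a s) b
          (by rw [Finset.card_insert_of_notMem ha]; omega)
          hbs'
          (by
            intro w hw u hu
            rcases Finset.mem_insert.mp hw with rfl | hw'
            · exact Finset.mem_insert_of_mem (hpre u hu)
            · exact Finset.mem_insert_of_mem (hclosed w hw' u hu))
          (Or.inr ⟨a, hga⟩)
          (fun u hu => Finset.mem_insert.mpr (Or.inl (gmap_inj hu hga)))
      have hl'ne : l' ≠ [] := by
        intro h; rw [h] at hl'head; simp at hl'head
      refine ⟨a :: l', rfl, ?_, ?_, ?_, ⟨i, ?_⟩⟩
      · apply List.isChain_cons.mpr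
        refine ⟨fun y hy => ?_, hl'chain⟩
        rw [hl'head] at hy
        injection hy with hy'
        rw [← hy']
        exact hga
      · rw [List.nodup_cons]
        exact ⟨fun hmem => (hl'nots a hmem) (Finset.mem_insert_self a s), hl'nodup⟩
      · intro x hx
        rcases List.mem_cons.mp hx with rfl | hx'
        · exact ha
        · exact fun hxs => (hl'nots x hx') (Finset.mem_insert_of_mem hxs)
      · obtain ⟨b', t', rfl⟩ := List.exists_cons_of_ne_nil hl'ne
        rw [List.getLast?_cons_cons]
        exact hl'last

end Comb2

section Comb3
variable {V : Type*} [DecidableEq V] {n : ℕ} {rv cv : Fin n → V}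
variable {φ : {v : V // ¬ v ∈ Set.range rv} ≃ {w : V // ¬ w ∈ Set.range cv}}

lemma gmap_tail_mem : ∀ (l : List V), List.Chain' (fun x y => gmap φ x = some y) l →
    ∀ v ∈ l, l.head? = some v ∨ ∃ u ∈ l, gmap φ u = some v := by
  intro l
  induction l with
  | nil => intro _ v hv; exact absurd hv List.not_mem_nil
  | cons a t ih =>
    intro hchain v hv
    rcases List.mem_cons.mp hv with rfl | hvt
    · exact Or.inl rfl
    · cases t with
      | nil => exact absurd hvt List.not_mem_nil
      | cons b t2 =>
        obtain ⟨hab, hchain'⟩ := List.isChain_cons_cons.mp hchain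
        rcases ih hchain' v hvt with hh | ⟨u, hu, hgu⟩
        · injection hh with hh'
          exact Or.inr ⟨a, List.mem_cons_self, hh' ▸ hab⟩
        · exact Or.inr ⟨u, List.mem_cons_of_mem a hu, hgu⟩

lemma gmap_disj (l' : List V) (hl' : List.Chain' (fun x y => gmap φ x = some y) l') :
    ∀ (l : List V), List.Chain' (fun x y => gmap φ x = some y) l →
    (∀ a b, l.head? = some a → l'.head? = some b → a ≠ b) →
    (∀ a u, l.head? = some a → gmap φ u = some a → u ∉ l') →
    (∀ b u, l'.head? = some b → gmap φ u = some b → u ∉ l) →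
    ∀ v ∈ l, v ∉ l' := by
  intro l
  induction l with
  | nil => intro _ _ _ _ v hv; exact absurd hv List.not_mem_nil
  | cons a t ih =>
    intro hchain hheads hpre2 hpre3 v hv
    have ha0 : a ∉ l' := by
      intro hal'
      rcases gmap_tail_mem l' hl' a hal' with hh | ⟨u, hu, hgu⟩
      · exact hheads a a rfl hh rfl
      · exact hpre2 a u rfl hgu hu
    rcases List.mem_cons.mp hv with rfl | hvt
    · exact ha0
    · cases t with
      | nil => exact absurd hvt List.not_mem_nil
      | cons b t2 =>
        obtain ⟨hab, hchain'⟩ := List.isChain_cons_cons.mp hchain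
        refine ih hchain' ?_ ?_ ?_ v hvt
        · intro a' b' ha' hb'
          injection ha' with ha''
          subst ha''
          intro hbb
          exact hpre3 b' a hb' (hbb ▸ hab) List.mem_cons_self
        · intro a' u ha' hgu
          injection ha' with ha''
          subst ha''
          have := gmap_inj hgu hab
          exact this ▸ ha0
        · intro b' u hb' hgu
          exact fun hut => hpre3 b' u hb' hgu (List.mem_cons_of_mem a hut)

end Comb3

lemma aux_paths {V : Type*} [Fintype V] [DecidableEq V] (E : Finset (V × V))
    (R C : Finset V) (n : ℕ) (rv cv : Fin n → V) (hrinj : Injective rv)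
    (hrR : ∀ k, rv k ∈ R) (hcC : ∀ i, cv i ∈ C)
    (φ : {v : V // ¬ v ∈ Set.range rv} ≃ {w : V // ¬ w ∈ Set.range cv})
    (hφ : ∀ v, ((φ v) : V) = (v : V) ∨ (((φ v) : V), (v : V)) ∈ E) :
    HasDisjointPaths E R C n := by
  have hbuild : ∀ k : Fin n, ∃ l : List V, l.head? = some (rv k) ∧
      List.Chain' (fun x y => gmap φ x = some y) l ∧ l.Nodup ∧
      (∀ x ∈ l, x ∉ (∅ : Finset V)) ∧ ∃ i, l.getLast? = some (cv i) := by
    intro k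
    apply gmap_build (Fintype.card V) ∅ (rv k)
    · simp
    · simp
    · intro w hw; exact absurd hw (Finset.notMem_empty w)
    · exact Or.inl ⟨k, rfl⟩
    · intro u hu
      exact absurd ⟨k, rfl⟩ (gmap_notin_rv hu)
  choose f hhead hchain hnodup _ hlast using hbuild
  have hne : ∀ k, f k ≠ [] := by
    intro k hk
    have := hhead k
    rw [hk] at this
    simp at this
  refine ⟨f, ?_, ?_⟩
  · intro k
    refine ⟨⟨hne k, hnodup k, ?_⟩, ⟨rv k, hrR k, hhead k⟩, ?_⟩
    · exact (hchain k).imp (fun a b h => gmap_edge hφ h)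
    · obtain ⟨i, hi⟩ := hlast k
      exact ⟨cv i, hcC i, hi⟩
  · intro k k' hkk' v hvk
    refine gmap_disj (f k') (hchain k') (f k) (hchain k) ?_ ?_ ?_ v hvk
    · intro a b hak hbk'
      rw [hhead k] at hak
      rw [hhead k'] at hbk'
      injection hak with ha
      injection hbk' with hb
      rw [← ha, ← hb]
      exact fun h => hkk' (hrinj h)
    · intro a u hak hgu
      rw [hhead k] at hak
      injection hak with ha
      rw [← ha] at hgu
      exact absurd ⟨k, rfl⟩ (gmap_notin_rv hgu)
    · intro b u hbk' hgu
      rw [hhead k'] at hbk'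
      injection hbk' with hb
      rw [← hb] at hgu
      exact absurd ⟨k', rfl⟩ (gmap_notin_rv hgu)


lemma aux_bound {V : Type*} [Fintype V] (E : Finset (V × V)) (R C : Finset V)
    {n : ℕ} (h : HasDisjointPaths E R C n) : n ≤ Fintype.card V := by
  obtain ⟨f, hf, hdisj⟩ := h
  have hhead : ∀ k, ∃ r, (f k).head? = some r :=
    fun k => ⟨(hf k).2.1.choose, (hf k).2.1.choose_spec.2⟩
  choose hd hhd using hhead
  have hmem : ∀ k, hd k ∈ f k := by
    intro k
    exact List.mem_of_mem_head? (by rw [hhd k]; rfl)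
  have hinj : Function.Injective hd := by
    intro k k' hkk'
    by_contra hne
    exact hdisj k k' hne (hd k) (hmem k) (hkk' ▸ hmem k')
  simpa using Fintype.card_le_of_injective hd hinj

/-- For every model `G ∈ M(E)`, the rank of the submatrix `T(G)_{C,R}` is at most
`b(R→C)`, the maximum number of pairwise vertex-disjoint directed paths from `R` to `C`. -/
theorem stmt_11 {V : Type*} [Fintype V] [DecidableEq V]
    (E : Finset (V × V)) (hloop : ∀ i : V, (i, i) ∉ E)
    (R C : Finset V) :
    ∀ G ∈ ModelSet E,
      (Matrix.of fun (c : {c : V // c ∈ C}) (r : {r : V // r ∈ R}) =>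
        netT G c.1 r.1).rank ≤ maxDisjointPaths E R C := by
  intro G hmem
  obtain ⟨hG, hunit⟩ := hmem
  classical
  set A : Matrix V V (RatFunc ℝ) := 1 - G with hAdef
  set T : Matrix V V (RatFunc ℝ) := netT G with hTdef
  have hTA : T * A = 1 :=
    Matrix.nonsing_inv_mul A ((Matrix.isUnit_iff_isUnit_det A).mp hunit)
  set M : Matrix {c : V // c ∈ C} {r : V // r ∈ R} (RatFunc ℝ) :=
    Matrix.of (fun (c : {c : V // c ∈ C}) (r : {r : V // r ∈ R}) => netT G c.1 r.1) with hMdef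
  set m : ℕ := M.rank with hmdef
  obtain ⟨cf, rf, hcf, hrf, hker⟩ := aux_exists_square M rfl
  set rv : Fin m → V := fun j => (rf j).1 with hrvdef
  set cv : Fin m → V := fun i => (cf i).1 with hcvdef
  have hrvinj : Function.Injective rv := fun i j h => hrf (Subtype.ext h)
  have hcvinj : Function.Injective cv := fun i j h => hcf (Subtype.ext h)
  have hM2 : ∀ y : Fin m → RatFunc ℝ,
      (Matrix.of fun i j => T (cv i) (rv j)).mulVec y = 0 → y = 0 := hker
  obtain ⟨φ, hφA⟩ := aux_phi A T hTA rv cv hrvinj hcvinj hM2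
  have hφ : ∀ v, ((φ v) : V) = (v : V) ∨ (((φ v) : V), (v : V)) ∈ E := by
    intro v
    rcases hφA v with h | h
    · exact Or.inl h
    · by_cases hvv : ((φ v) : V) = (v : V)
      · exact Or.inl hvv
      · right
        have hA0 : A v.1 (φ v).1 = - G v.1 (φ v).1 := by
          rw [hAdef]
          simp [Matrix.sub_apply, Matrix.one_apply_ne (Ne.symm hvv)]
        rw [hA0, neg_ne_zero] at h
        exact (hG ((φ v) : V) (v : V)).mp h
  have hpaths : HasDisjointPaths E R C m :=
    aux_paths E R C m rv cv hrvinj (fun k => (rf k).2) (fun i => (cf i).2) φ hφ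
  have hbdd : BddAbove {n : ℕ | HasDisjointPaths E R C n} :=
    ⟨Fintype.card V, fun n hn => aux_bound E R C hn⟩
  exact le_csSup hbdd hpaths
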